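/- For the sparse-histogram RDP mechanism with 2k ≤ γn: if the input histogram θ has support of size r < k (θ = (θ_1,...,θ_r,0,...,0) with all θ_j > 0), then the projected release δ(z) satisfies ‖θ − δ(z)‖_1 = O_P(r/(αn)). -/

import Mathlib

open MeasureTheory

def IsHist (n k : ℕ) (θ : Fin k → ℝ) : Prop :=
  (∀ j, ∃ m : ℕ, θ j = (m : ℝ) / n) ∧ (∑ j, θ j) = 1

noncomputable def l1 {k : ℕ} (θ θ' : Fin k → ℝ) : ℝ := ∑ j, |θ j - θ' j|

open Classical in
/-- Sparse-histogram noise: empty bins kept exact, occupied bins get Laplace noise. -/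
noncomputable def noised {k : ℕ} (n : ℕ) (α : ℝ) (θ : Fin k → ℝ) (L : Fin k → ℝ) :
    Fin k → ℝ :=
  fun j => if θ j = 0 then θ j else θ j + 2 * L j / ((n : ℝ) * α)

open Set Real in
lemma my_integrable_comp_abs {f : ℝ → ℝ} (hm : IntegrableOn (fun x => f |x|) (Ioi 0)) :
    Integrable (fun x => f |x|) := by
  have int_Iic : IntegrableOn (fun x ↦ f |x|) (Iic 0) := by
    rw [← Measure.map_neg_eq_self (volume : Measure ℝ)]
    let m : MeasurableEmbedding fun x : ℝ => -x := (Homeomorph.neg ℝ).measurableEmbedding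
    rw [m.integrableOn_map_iff]
    simp_rw [Function.comp_def, abs_neg, neg_preimage, neg_Iic, neg_zero]
    exact Iff.mpr integrableOn_Ici_iff_integrableOn_Ioi hm
  have := int_Iic.union hm
  rwa [Iic_union_Ioi, integrableOn_univ] at this

open Set Real in
lemma lap_one : ∫⁻ t : ℝ, ENNReal.ofReal |t|
    ∂(volume.withDensity fun t => ENNReal.ofReal ((1 / 2) * Real.exp (-|t|))) = 1 := by
  rw [lintegral_withDensity_eq_lintegral_mul _
    (by measurability) measurable_abs.ennreal_ofReal]
  have h1 : ∀ t : ℝ, ((fun t => ENNReal.ofReal ((1/2) * Real.exp (-|t|))) * fun t => ENNReal.ofReal |t|) t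
      = ENNReal.ofReal ((fun x => 1/2 * Real.exp (-x) * x) |t|) := by
    intro t
    have hnn : (0:ℝ) ≤ (1/2) * Real.exp (-|t|) := by positivity
    simp only [Pi.mul_apply, ← ENNReal.ofReal_mul hnn]
  simp_rw [h1]
  have hIoi : IntegrableOn (fun x => 1/2 * Real.exp (-x) * x) (Ioi 0) := by
    have := Real.GammaIntegral_convergent (s := 2) (by norm_num)
    simp only [show (2:ℝ) - 1 = 1 by norm_num, Real.rpow_one] at this
    simpa [mul_assoc, IntegrableOn] using this.const_mul (1/2)
  have hint : Integrable (fun t : ℝ => (fun x => 1/2 * Real.exp (-x) * x) |t|) := by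
    apply my_integrable_comp_abs (f := fun x => 1/2 * Real.exp (-x) * x)
    apply hIoi.congr_fun _ measurableSet_Ioi
    intro x hx
    simp only [abs_of_pos (show (0:ℝ) < x from hx)]
  rw [← ofReal_integral_eq_lintegral_ofReal hint (Filter.Eventually.of_forall fun t => by positivity)]
  rw [integral_comp_abs (f := fun x => 1/2 * Real.exp (-x) * x)]
  have : ∫ x in Ioi (0:ℝ), 1/2 * Real.exp (-x) * x = 1/2 * ∫ x in Ioi (0:ℝ), Real.exp (-x) * x := by
    simp_rw [mul_assoc]
    exact MeasureTheory.integral_const_mul _ _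
  rw [this, show ∫ x in Ioi (0:ℝ), Real.exp (-x) * x = Real.Gamma 2 by
      rw [Real.Gamma_eq_integral (by norm_num)]
      norm_num,
    Real.Gamma_two]
  norm_num

lemma pi_map_eval {k : ℕ} (μ : Measure ℝ) [IsProbabilityMeasure μ] (j : Fin k) :
    (Measure.pi fun _ : Fin k => μ).map (fun L => L j) = μ := by
  ext s hs
  rw [Measure.map_apply (measurable_pi_apply j) hs]
  rw [show (fun L : Fin k → ℝ => L j) = Function.eval j from rfl, Set.eval_preimage,
    Measure.pi_pi]
  rw [Finset.prod_eq_single j (fun i _ hij => by rw [Function.update_of_ne hij]; exact measure_univ)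
    (fun h => absurd (Finset.mem_univ j) h), Function.update_self]

/-- **Accuracy of the projected sparse-histogram RDP release.** Assume `2k ≤ γn`. If
the input histogram `θ` is supported on its first `r < k` coordinates (all positive
there), and `δ` is an `ℓ₁` projection onto lattice histograms, then
`‖θ - δ(z)‖₁ = O_P(r/(αn))`: for every `ε > 0` there is `C` (uniform in all the
parameters) with `P(‖θ - δ(z)‖₁ > C r/(αn)) ≤ ε`. -/
theorem stmt12 (lap : Measure ℝ) [IsProbabilityMeasure lap]
    (hlap : lap = volume.withDensity fun t => ENNReal.ofReal ((1 / 2) * Real.exp (-|t|))) :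
    ∀ ε : ℝ, 0 < ε → ∃ C : ℝ,
      ∀ (n k r : ℕ) (α γ : ℝ), 0 < n → 0 < α → 2 * (k : ℝ) ≤ γ * n → r < k →
        ∀ θ : Fin k → ℝ, IsHist n k θ →
          (∀ j : Fin k, r ≤ (j : ℕ) → θ j = 0) →
          (∀ j : Fin k, (j : ℕ) < r → 0 < θ j) →
          ∀ δ : (Fin k → ℝ) → (Fin k → ℝ),
            (∀ z : Fin k → ℝ, IsHist n k (δ z) ∧
              ∀ θ' : Fin k → ℝ, IsHist n k θ' → l1 (δ z) z ≤ l1 θ' z) →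
            (Measure.pi fun _ : Fin k => lap)
                {L | C * r / (α * n) < l1 θ (δ (noised n α θ L))}
              ≤ ENNReal.ofReal ε := by
  intro ε hε
  refine ⟨4 / ε, ?_⟩
  intro n k r α γ hn hα hγ hrk θ hθ hsupp hpos δ hδ
  have hn' : (0:ℝ) < n := by exact_mod_cast hn
  have hr0 : 0 < r := by
    by_contra h
    push_neg at h
    have hz : ∀ j, θ j = 0 := fun j => hsupp j (by omega)
    have h2 := hθ.2
    rw [Finset.sum_eq_zero (fun j _ => hz j)] at h2
    norm_num at h2
  have hr' : (0:ℝ) < r := by exact_mod_cast hr0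
  classical
  set occ : Finset (Fin k) := Finset.univ.filter (fun j => (j:ℕ) < r) with hocc
  -- deterministic inclusion
  have hsub : {L : Fin k → ℝ | 4/ε * r / (α*n) < l1 θ (δ (noised n α θ L))} ⊆
      {L : Fin k → ℝ | ENNReal.ofReal ((r:ℝ)/ε) ≤ ∑ j ∈ occ, ENNReal.ofReal |L j|} := by
    intro L hL
    simp only [Set.mem_setOf_eq] at hL ⊢
    set z := noised n α θ L with hzdef
    set S : ℝ := ∑ j ∈ occ, |L j| with hS
    have hzval : l1 θ z = 2/(n*α) * S := by
      unfold l1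
      rw [← Finset.sum_subset occ.subset_univ (fun j _ hj => ?_), hS, Finset.mul_sum]
      · refine Finset.sum_congr rfl fun j hj => ?_
        have hjr : (j:ℕ) < r := by simpa [hocc] using hj
        have hθj : θ j ≠ 0 := ne_of_gt (hpos j hjr)
        have : z j = θ j + 2 * L j / ((n:ℝ) * α) := by
          simp [hzdef, noised, hθj]
        rw [this]
        have hna : (0:ℝ) < (n:ℝ) * α := mul_pos hn' hα
        rw [show θ j - (θ j + 2 * L j / ((n:ℝ)*α)) = -(2 * L j / ((n:ℝ)*α)) by ring,
          abs_neg, abs_div, abs_of_pos hna, abs_mul]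
        norm_num
        ring
      · have hjr : ¬ (j:ℕ) < r := by simpa [hocc] using hj
        have hθj : θ j = 0 := hsupp j (by omega)
        have : z j = θ j := by simp [hzdef, noised, hθj]
        simp [this]
    have htri : l1 θ (δ z) ≤ l1 θ z + l1 (δ z) z := by
      unfold l1
      rw [← Finset.sum_add_distrib]
      refine Finset.sum_le_sum fun j _ => ?_
      calc |θ j - δ z j| = |(θ j - z j) - (δ z j - z j)| := by ring_nf
        _ ≤ |θ j - z j| + |δ z j - z j| := abs_sub _ _
    have hmin : l1 (δ z) z ≤ l1 θ z := (hδ z).2 θ hθ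
    have hbound : l1 θ (δ z) ≤ 4 * S / (α * n) := by
      have : 2 * (2/(n*α)*S) = 4*S/(α*n) := by
        field_simp
        ring
      calc l1 θ (δ z) ≤ l1 θ z + l1 (δ z) z := htri
        _ ≤ 2 * l1 θ z := by linarith
        _ = 4*S/(α*n) := by rw [hzval]; exact this
    have hαn : (0:ℝ) < α * n := mul_pos hα hn'
    have h5 : 4/ε * r / (α*n) < 4 * S / (α*n) := lt_of_lt_of_le hL hbound
    have h6 : 4/ε * r < 4 * S := by
      exact (div_lt_div_iff_of_pos_right hαn).mp h5
    have h7 : (r:ℝ)/ε < S := by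
      have heq : 4/ε * (r:ℝ) = 4 * ((r:ℝ)/ε) := by ring
      linarith [heq ▸ h6]
    calc ENNReal.ofReal ((r:ℝ)/ε) ≤ ENNReal.ofReal S := ENNReal.ofReal_le_ofReal h7.le
      _ = ∑ j ∈ occ, ENNReal.ofReal |L j| :=
        ENNReal.ofReal_sum_of_nonneg (fun j _ => abs_nonneg _)
  have hmeas : Measurable (fun L : Fin k → ℝ => ∑ j ∈ occ, ENNReal.ofReal |L j|) :=
    Finset.measurable_sum _ (fun j _ => (measurable_pi_apply j).abs.ennreal_ofReal)
  have hco : ∀ j : Fin k, ∫⁻ L, ENNReal.ofReal |L j| ∂(Measure.pi fun _ : Fin k => lap) = 1 := by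
    intro j
    have := lintegral_map (μ := Measure.pi fun _ : Fin k => lap)
      (f := fun t : ℝ => ENNReal.ofReal |t|) (g := fun L : Fin k → ℝ => L j)
      measurable_abs.ennreal_ofReal (measurable_pi_apply j)
    rw [← this, pi_map_eval lap j, hlap, lap_one]
  have hint : ∫⁻ L, (∑ j ∈ occ, ENNReal.ofReal |L j|) ∂(Measure.pi fun _ : Fin k => lap)
      = occ.card := by
    rw [lintegral_finset_sum _ (fun j _ => (measurable_pi_apply j).abs.ennreal_ofReal)]
    simp [hco]
  have hcard : occ.card ≤ r := by
    have := Finset.card_le_card_of_injOn (f := fun j : Fin k => (j:ℕ))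
      (s := occ) (t := Finset.range r)
      (fun j hj => by simpa [hocc, Finset.mem_range] using hj)
      (fun a _ b _ hab => Fin.val_injective hab)
    simpa using this
  have hre : (0:ℝ) < (r:ℝ)/ε := div_pos hr' hε
  have hne : ENNReal.ofReal ((r:ℝ)/ε) ≠ 0 := by
    simp [ENNReal.ofReal_eq_zero, not_le, hre]
  calc (Measure.pi fun _ : Fin k => lap) {L | 4/ε * r / (α * n) < l1 θ (δ (noised n α θ L))}
      ≤ (Measure.pi fun _ : Fin k => lap)
        {L : Fin k → ℝ | ENNReal.ofReal ((r:ℝ)/ε) ≤ ∑ j ∈ occ, ENNReal.ofReal |L j|} :=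
        measure_mono hsub
    _ ≤ (∫⁻ L, (∑ j ∈ occ, ENNReal.ofReal |L j|) ∂(Measure.pi fun _ : Fin k => lap))
          / ENNReal.ofReal ((r:ℝ)/ε) :=
        meas_ge_le_lintegral_div hmeas.aemeasurable hne ENNReal.ofReal_ne_top
    _ ≤ ((r : ℕ) : ENNReal) / ENNReal.ofReal ((r:ℝ)/ε) := by
        gcongr
        rw [hint]
        exact_mod_cast hcard
    _ = ENNReal.ofReal ε := by
        rw [show ((r : ℕ) : ENNReal) = ENNReal.ofReal (r:ℝ) by simp,
          ← ENNReal.ofReal_div_of_pos hre]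
        congr 1
        field_simp
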